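/- With the previous notation, for every $\mu \in [0,1]$: $m^2\|u_3(\mu) - u_4(\mu)\|^2 + \mu(1-\mu) m^2 \|u_1 - u_2\|^2 + m\,\mu\, I_{14}(\mu) + m(1-\mu) I_{24}(\mu) \le \mu(1-\mu)\|g_1 - g_2\|_{V'}^2$. -/

import Mathlib

/-- Lemma 4.1 (abstract form): quantitative estimate combining the error estimate of
Theorem 2.1 with the bound on `α + β`. -/
theorem stmt_5 {V : Type*} [NormedAddCommGroup V] [InnerProductSpace ℝ V] [CompleteSpace V]
    (K : Set V) (hKne : K.Nonempty) (hKcl : IsClosed K) (hKco : Convex ℝ K)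
    (a : V →L[ℝ] V →L[ℝ] ℝ) (hsym : ∀ u v : V, a u v = a v u)
    (m : ℝ) (hm : 0 < m) (hcoer : ∀ v : V, m * ‖v‖ ^ 2 ≤ a v v)
    (g₁ g₂ : V →L[ℝ] ℝ) (u₁ u₂ : V) (u₄ : ℝ → V)
    (hu₁ : u₁ ∈ K ∧ ∀ v ∈ K, g₁ (v - u₁) ≤ a u₁ (v - u₁))
    (hu₂ : u₂ ∈ K ∧ ∀ v ∈ K, g₂ (v - u₂) ≤ a u₂ (v - u₂))
    (hu₄ : ∀ μ ∈ Set.Icc (0 : ℝ) 1, u₄ μ ∈ K ∧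
      ∀ v ∈ K, (μ • g₁ + (1 - μ) • g₂) (v - u₄ μ) ≤ a (u₄ μ) (v - u₄ μ)) :
    ∀ μ ∈ Set.Icc (0 : ℝ) 1,
      m ^ 2 * ‖(μ • u₁ + (1 - μ) • u₂) - u₄ μ‖ ^ 2
        + μ * (1 - μ) * m ^ 2 * ‖u₁ - u₂‖ ^ 2
        + m * μ * (a u₁ (u₄ μ - u₁) - g₁ (u₄ μ - u₁))
        + m * (1 - μ) * (a u₂ (u₄ μ - u₂) - g₂ (u₄ μ - u₂))
      ≤ μ * (1 - μ) * ‖g₁ - g₂‖ ^ 2 := by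
  obtain ⟨hu₁K, hu₁V⟩ := hu₁
  obtain ⟨hu₂K, hu₂V⟩ := hu₂
  intro μ hμ
  obtain ⟨hμ0, hμ1⟩ := hμ
  have h1μ : (0:ℝ) ≤ 1 - μ := by linarith
  obtain ⟨hu₄K, hu₄V⟩ := hu₄ μ ⟨hμ0, hμ1⟩
  have hu₃K : μ • u₁ + (1 - μ) • u₂ ∈ K := hKco hu₁K hu₂K hμ0 h1μ (by ring)
  -- the variational inequalities at suitable test points
  have h14 : g₁ (u₄ μ - u₁) ≤ a u₁ (u₄ μ - u₁) := hu₁V _ hu₄K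
  have h24 : g₂ (u₄ μ - u₂) ≤ a u₂ (u₄ μ - u₂) := hu₂V _ hu₄K
  have h12 : g₁ (u₂ - u₁) ≤ a u₁ (u₂ - u₁) := hu₁V _ hu₂K
  have h21 : g₂ (u₁ - u₂) ≤ a u₂ (u₁ - u₂) := hu₂V _ hu₁K
  have h43 : (μ • g₁ + (1 - μ) • g₂) ((μ • u₁ + (1 - μ) • u₂) - u₄ μ)
      ≤ a (u₄ μ) ((μ • u₁ + (1 - μ) • u₂) - u₄ μ) := hu₄V _ hu₃K
  -- coercivity
  have hce : m * ‖(μ • u₁ + (1 - μ) • u₂) - u₄ μ‖ ^ 2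
      ≤ a ((μ • u₁ + (1 - μ) • u₂) - u₄ μ) ((μ • u₁ + (1 - μ) • u₂) - u₄ μ) := hcoer _
  have hcw : m * ‖u₁ - u₂‖ ^ 2 ≤ a (u₁ - u₂) (u₁ - u₂) := hcoer _
  -- operator norm bound
  have hC : (g₁ - g₂) (u₁ - u₂) ≤ ‖g₁ - g₂‖ * ‖u₁ - u₂‖ := by
    calc (g₁ - g₂) (u₁ - u₂) ≤ ‖(g₁ - g₂) (u₁ - u₂)‖ := le_abs_self _
    _ ≤ ‖g₁ - g₂‖ * ‖u₁ - u₂‖ := (g₁ - g₂).le_opNorm _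
  -- expand everything into scalar atoms
  simp only [map_sub, map_add, map_smul, ContinuousLinearMap.sub_apply,
    ContinuousLinearMap.add_apply, ContinuousLinearMap.smul_apply, smul_eq_mul]
    at h14 h24 h12 h21 h43 hce hcw hC ⊢
  -- m ‖u₁ - u₂‖ ≤ ‖g₁ - g₂‖
  have hmw : m * ‖u₁ - u₂‖ ≤ ‖g₁ - g₂‖ := by
    have hW2 : m * ‖u₁ - u₂‖ ^ 2 ≤ ‖g₁ - g₂‖ * ‖u₁ - u₂‖ := by linarith
    rcases eq_or_lt_of_le (norm_nonneg (u₁ - u₂)) with hW0 | hW0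
    · rw [← hW0]; simpa using norm_nonneg (g₁ - g₂)
    · have := (mul_le_mul_iff_left₀ hW0).mp (by nlinarith : (m * ‖u₁ - u₂‖) * ‖u₁ - u₂‖ ≤ ‖g₁ - g₂‖ * ‖u₁ - u₂‖)
      exact this
  -- Step A: key intermediate estimate
  have hA : m * ‖(μ • u₁ + (1 - μ) • u₂) - u₄ μ‖ ^ 2
      + μ * (a u₁ (u₄ μ) - a u₁ u₁ - (g₁ (u₄ μ) - g₁ u₁))
      + (1 - μ) * (a u₂ (u₄ μ) - a u₂ u₂ - (g₂ (u₄ μ) - g₂ u₂))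
      ≤ μ * (1 - μ) * ((g₁ u₁ - g₁ u₂ - (g₂ u₁ - g₂ u₂))
          - (a u₁ u₁ - a u₁ u₂ - (a u₂ u₁ - a u₂ u₂))) := by
    linarith [hce, h43]
  -- bound the right-hand side of Step A
  have hB : μ * (1 - μ) * ((g₁ u₁ - g₁ u₂ - (g₂ u₁ - g₂ u₂))
        - (a u₁ u₁ - a u₁ u₂ - (a u₂ u₁ - a u₂ u₂)))
      ≤ μ * (1 - μ) * (‖g₁ - g₂‖ * ‖u₁ - u₂‖ - m * ‖u₁ - u₂‖ ^ 2) := by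
    apply mul_le_mul_of_nonneg_left _ (mul_nonneg hμ0 h1μ)
    linarith
  have hG0 : (0:ℝ) ≤ ‖g₁ - g₂‖ := norm_nonneg _
  have hfin1 := mul_le_mul_of_nonneg_left (hA.trans hB) hm.le
  have hfin2 := mul_le_mul_of_nonneg_left hmw (mul_nonneg (mul_nonneg hμ0 h1μ) hG0)
  linarith [hfin1, hfin2]
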